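/- The function f(x) = −x·log x + x·(x−1)·log(1 − 1/x) is strictly concave on the interval [2, ∞) of real numbers (its second derivative is strictly negative there). -/

import Mathlib

open Real Set

private noncomputable def gAux (x : ℝ) : ℝ := x * (x - 1) * Real.log (x - 1) - x ^ 2 * Real.log x

private noncomputable def g1Aux (x : ℝ) : ℝ :=
  (2 * x - 1) * Real.log (x - 1) - 2 * x * Real.log x

private noncomputable def g2Aux (x : ℝ) : ℝ :=
  2 * Real.log (x - 1) + (2 * x - 1) / (x - 1) - 2 * Real.log x - 2

private lemma hasDerivAt_gAux {x : ℝ} (hx : 1 < x) : HasDerivAt gAux (g1Aux x) x := by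
  have hx0 : x ≠ 0 := by linarith
  have hx1 : x - 1 ≠ 0 := by intro h; nlinarith [h]
  have hlog1 : HasDerivAt (fun y : ℝ => Real.log (y - 1)) (1 / (x - 1)) x := by
    have := (Real.hasDerivAt_log hx1).comp x ((hasDerivAt_id x).sub_const 1)
    simpa [Function.comp_def] using this
  have hpoly : HasDerivAt (fun y : ℝ => y * (y - 1)) (1 * (x - 1) + x * 1) x :=
    (hasDerivAt_id x).mul ((hasDerivAt_id x).sub_const 1)
  have h1 : HasDerivAt (fun y : ℝ => y * (y - 1) * Real.log (y - 1))
      ((1 * (x - 1) + x * 1) * Real.log (x - 1) + x * (x - 1) * (1 / (x - 1))) x :=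
    hpoly.mul hlog1
  have h2 : HasDerivAt (fun y : ℝ => y ^ 2 * Real.log y)
      ((2 : ℕ) * x ^ 1 * Real.log x + x ^ 2 * x⁻¹) x :=
    (hasDerivAt_pow 2 x).mul (Real.hasDerivAt_log hx0)
  have h := h1.sub h2
  have : (1 * (x - 1) + x * 1) * Real.log (x - 1) + x * (x - 1) * (1 / (x - 1)) -
      ((2 : ℕ) * x ^ 1 * Real.log x + x ^ 2 * x⁻¹) = g1Aux x := by
    unfold g1Aux
    field_simp
    ring
  rw [this] at h
  exact h

private lemma hasDerivAt_g1Aux {x : ℝ} (hx : 1 < x) : HasDerivAt g1Aux (g2Aux x) x := by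
  have hx0 : x ≠ 0 := by linarith
  have hx1 : x - 1 ≠ 0 := by intro h; nlinarith [h]
  have hlog1 : HasDerivAt (fun y : ℝ => Real.log (y - 1)) (1 / (x - 1)) x := by
    have := (Real.hasDerivAt_log hx1).comp x ((hasDerivAt_id x).sub_const 1)
    simpa [Function.comp_def] using this
  have hpoly : HasDerivAt (fun y : ℝ => 2 * y - 1) 2 x := by
    simpa using ((hasDerivAt_id x).const_mul 2).sub_const 1
  have h1 : HasDerivAt (fun y : ℝ => (2 * y - 1) * Real.log (y - 1))
      (2 * Real.log (x - 1) + (2 * x - 1) * (1 / (x - 1))) x := hpoly.mul hlog1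
  have h2 : HasDerivAt (fun y : ℝ => 2 * y * Real.log y)
      (2 * Real.log x + 2 * x * x⁻¹) x := by
    have := ((hasDerivAt_id x).const_mul 2).mul (Real.hasDerivAt_log hx0)
    simpa [Pi.mul_def] using this
  have h := h1.sub h2
  have : 2 * Real.log (x - 1) + (2 * x - 1) * (1 / (x - 1)) -
      (2 * Real.log x + 2 * x * x⁻¹) = g2Aux x := by
    unfold g2Aux
    field_simp
    ring
  rw [this] at h
  exact h

private lemma g2Aux_neg {x : ℝ} (hx : 2 < x) : g2Aux x < 0 := by
  have hx0 : (0 : ℝ) < x := by linarith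
  have hx1 : (0 : ℝ) < x - 1 := by linarith
  have ht : (0 : ℝ) < (x - 1) / x := div_pos hx1 hx0
  have hne : (x - 1) / x ≠ 1 := by
    intro h
    rw [div_eq_one_iff_eq (ne_of_gt hx0)] at h
    linarith
  have hlog : Real.log ((x - 1) / x) < (x - 1) / x - 1 :=
    Real.log_lt_sub_one_of_pos ht hne
  have hld : Real.log ((x - 1) / x) = Real.log (x - 1) - Real.log x :=
    Real.log_div (by linarith) (by linarith)
  have hval : (x - 1) / x - 1 = -1 / x := by field_simp; ring
  have hlog2 : Real.log (x - 1) - Real.log x < -1 / x := by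
    rw [← hld, ← hval]; exact hlog
  unfold g2Aux
  have key : 2 * (-1 / x) + (2 * x - 1) / (x - 1) - 2 ≤ 0 := by
    have : 2 * (-1 / x) + (2 * x - 1) / (x - 1) - 2 = (2 - x) / (x * (x - 1)) := by
      field_simp
      ring
    rw [this]
    apply div_nonpos_of_nonpos_of_nonneg
    · linarith
    · positivity
  nlinarith [hlog2]

private lemma gAux_continuousOn : ContinuousOn gAux (Set.Ici (2:ℝ)) := by
  apply ContinuousOn.sub
  · apply ContinuousOn.mul
    · fun_prop
    · apply ContinuousOn.log (by fun_prop)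
      intro x hx
      simp only [Set.mem_Ici] at hx
      intro h; nlinarith [h]
  · apply ContinuousOn.mul (by fun_prop)
    apply ContinuousOn.log (by fun_prop)
    intro x hx
    simp only [Set.mem_Ici] at hx
    intro h; nlinarith [h]

private lemma gAux_strictConcave : StrictConcaveOn ℝ (Set.Ici (2:ℝ)) gAux := by
  apply strictConcaveOn_of_deriv2_neg (convex_Ici 2) gAux_continuousOn
  intro x hx
  rw [interior_Ici] at hx
  have hx2 : (2 : ℝ) < x := hx
  have hderiv : deriv^[2] gAux x = g2Aux x := by
    have hev : deriv gAux =ᶠ[nhds x] g1Aux := by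
      filter_upwards [isOpen_Ioi.mem_nhds (show (1:ℝ) < x by linarith)] with y hy
      exact (hasDerivAt_gAux hy).deriv
    simp only [Function.iterate_succ, Function.iterate_zero, Function.comp_apply, id]
    rw [hev.deriv_eq]
    exact (hasDerivAt_g1Aux (by linarith : (1:ℝ) < x)).deriv
  rw [hderiv]
  exact g2Aux_neg hx2

private lemma f_eq_gAux {x : ℝ} (hx : x ∈ Set.Ici (2:ℝ)) :
    -x * Real.log x + x * (x - 1) * Real.log (1 - 1 / x) = gAux x := by
  simp only [Set.mem_Ici] at hx
  have hx0 : x ≠ 0 := by linarith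
  have hx1 : x - 1 ≠ 0 := by intro h; nlinarith [h]
  have h1 : (1 : ℝ) - 1 / x = (x - 1) / x := by field_simp
  rw [h1, Real.log_div hx1 hx0]
  unfold gAux
  ring

/-- `f(x) = -x log x + x (x-1) log (1 - 1/x)` is strictly concave on `[2, ∞)`. -/
theorem f_strictConcave :
    StrictConcaveOn ℝ (Set.Ici (2:ℝ))
      (fun x => -x * Real.log x + x * (x - 1) * Real.log (1 - 1 / x)) := by
  obtain ⟨hconv, hg⟩ := gAux_strictConcave
  refine ⟨hconv, fun x hx y hy hxy a b ha hb hab => ?_⟩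
  have hmem : a • x + b • y ∈ Set.Ici (2:ℝ) := hconv hx hy ha.le hb.le hab
  simp only
  rw [f_eq_gAux hx, f_eq_gAux hy, f_eq_gAux hmem]
  exact hg hx hy hxy ha hb hab
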